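/- Let a, b, m, s : ℤ → ℂ be sequences such that a(n) ≠ 0 and b(n) ≠ 0 for every integer n, and such that the values s(n) are pairwise distinct (s(i) ≠ s(j) whenever i ≠ j). For integers k ≤ n define F(n,k) = (b(n)/b(k)) · ∏_{i=k+1}^{n} [ m(i) · (s(k) − s(i−1) + a(i−1)·b(i−1)·m(i−1)) / (s(k) − s(i)) ] and G(n,k) = (a(k)/a(n)) · ∏_{i=k}^{n−1} [ m(i) · (s(n) − s(i+1) + a(i+1)·b(i+1)·m(i+1)) / (s(n) − s(i)) ]. Then for all integers k ≤ n, ∑_{i=k}^{n} F(n,i)·G(i,k) equals 1 if n = k and equals 0 if n > k. -/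

import Mathlib

open Polynomial Finset

lemma prod_shift_up (h : ℤ → ℂ) (a b : ℤ) :
    ∏ j ∈ Finset.Icc (a+1) b, h (j-1) = ∏ j ∈ Finset.Icc a (b-1), h j := by
  rw [show b = (b-1)+1 by ring, ← Finset.map_add_right_Icc, Finset.prod_map]
  simp

lemma prod_shift_down (h : ℤ → ℂ) (a b : ℤ) :
    ∏ j ∈ Finset.Icc a (b-1), h (j+1) = ∏ j ∈ Finset.Icc (a+1) b, h j := by
  rw [show a = (a+1)+(-1) by ring, show b - 1 = b + (-1) by ring,
    ← Finset.map_add_right_Icc, Finset.prod_map]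
  refine Finset.prod_congr (by norm_num) fun x _ => ?_
  simp [addRightEmbedding]

lemma prod_split (f : ℤ → ℂ) {k i n : ℤ} (hk : k ≤ i) (hn : i ≤ n) :
    (∏ j ∈ Finset.Icc k (i-1), f j) * ∏ j ∈ Finset.Icc (i+1) n, f j
      = ∏ j ∈ (Finset.Icc k n).erase i, f j := by
  rw [← Finset.prod_union (by
      rw [Finset.disjoint_left]
      intro x hx hx'
      simp only [Finset.mem_Icc] at hx hx'
      omega)]
  apply Finset.prod_congr _ fun _ _ => rfl
  ext x
  simp only [Finset.mem_union, Finset.mem_Icc, Finset.mem_erase]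
  omega

lemma prod_merge (g : ℤ → ℂ) {k i n : ℤ} (hk : k ≤ i) (hn : i ≤ n) (hkn : k < n) :
    (∏ j ∈ Finset.Icc i (n-1), g j) * ∏ j ∈ Finset.Icc (k+1) i, g j
      = g i * ∏ j ∈ Finset.Icc (k+1) (n-1), g j := by
  rcases eq_or_lt_of_le hn with rfl | hlt
  · rw [Finset.Icc_eq_empty (by omega), Finset.prod_empty, one_mul,
      show Finset.Icc (k+1) i = insert i (Finset.Icc (k+1) (i-1)) by
        ext x; simp only [Finset.mem_insert, Finset.mem_Icc]; omega,
      Finset.prod_insert (by simp only [Finset.mem_Icc]; omega)]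
  · rw [show Finset.Icc i (n-1) = insert i (Finset.Icc (i+1) (n-1)) by
        ext x; simp only [Finset.mem_insert, Finset.mem_Icc]; omega,
      Finset.prod_insert (by simp only [Finset.mem_Icc]; omega), mul_assoc]
    congr 1
    rw [← Finset.prod_union (by
        rw [Finset.disjoint_left]
        intro x hx hx'
        simp only [Finset.mem_Icc] at hx hx'
        omega)]
    apply Finset.prod_congr _ fun _ _ => rfl
    ext x
    simp only [Finset.mem_union, Finset.mem_Icc]
    omega

lemma term_eq (a b m s : ℤ → ℂ)
    (ha : ∀ n : ℤ, a n ≠ 0) (hb : ∀ n : ℤ, b n ≠ 0)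
    {k n i : ℤ} (hkn : k < n) (hik : k ≤ i) (hin : i ≤ n) :
    ((b n / b i) *
      ∏ j ∈ Finset.Icc (i + 1) n,
        (m j * (s i - s (j - 1) + a (j - 1) * b (j - 1) * m (j - 1)) / (s i - s j))) *
    ((a k / a i) *
      ∏ j ∈ Finset.Icc k (i - 1),
        (m j * (s i - s (j + 1) + a (j + 1) * b (j + 1) * m (j + 1)) / (s i - s j)))
    = (a k * b n * ∏ j ∈ Finset.Icc k n, m j) *
      ((∏ j ∈ Finset.Icc (k+1) (n-1), (s i - s j + a j * b j * m j)) *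
        ∏ j ∈ (Finset.Icc k n).erase i, (s i - s j)⁻¹) := by
  have e1 : ∏ j ∈ Finset.Icc (i+1) n, (s i - s (j-1) + a (j-1) * b (j-1) * m (j-1))
      = ∏ j ∈ Finset.Icc i (n-1), (s i - s j + a j * b j * m j) :=
    prod_shift_up (fun j => s i - s j + a j * b j * m j) i n
  have e2 : ∏ j ∈ Finset.Icc k (i-1), (s i - s (j+1) + a (j+1) * b (j+1) * m (j+1))
      = ∏ j ∈ Finset.Icc (k+1) i, (s i - s j + a j * b j * m j) :=
    prod_shift_down (fun j => s i - s j + a j * b j * m j) k i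
  have e3 := prod_merge (fun j => s i - s j + a j * b j * m j) hik hin hkn
  have e4 := prod_split m hik hin
  have e5 := prod_split (fun j => (s i - s j)⁻¹) hik hin
  have e6 : m i * ∏ j ∈ (Finset.Icc k n).erase i, m j = ∏ j ∈ Finset.Icc k n, m j :=
    Finset.mul_prod_erase _ _ (by simp only [Finset.mem_Icc]; omega)
  simp only [div_eq_mul_inv, Finset.prod_mul_distrib]
  rw [e1, e2]
  trans (b n * (b i)⁻¹ * (a k * (a i)⁻¹)) *
    (((∏ j ∈ Finset.Icc k (i-1), m j) * ∏ j ∈ Finset.Icc (i+1) n, m j) *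
      (((∏ j ∈ Finset.Icc i (n-1), (s i - s j + a j * b j * m j)) *
          ∏ j ∈ Finset.Icc (k+1) i, (s i - s j + a j * b j * m j)) *
        ((∏ j ∈ Finset.Icc k (i-1), (s i - s j)⁻¹) *
          ∏ j ∈ Finset.Icc (i+1) n, (s i - s j)⁻¹)))
  · ring
  · rw [e3, e4, e5, ← e6]
    have cA : a i * (a i)⁻¹ = 1 := mul_inv_cancel₀ (ha i)
    have cB : b i * (b i)⁻¹ = 1 := mul_inv_cancel₀ (hb i)
    linear_combination
      ((a k * b n * m i * (∏ j ∈ (Finset.Icc k n).erase i, m j) *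
          (∏ j ∈ Finset.Icc (k+1) (n-1), (s i - s j + a j * b j * m j)) *
          ∏ j ∈ (Finset.Icc k n).erase i, (s i - s j)⁻¹) * (b i * (b i)⁻¹)) * cA +
      (a k * b n * m i * (∏ j ∈ (Finset.Icc k n).erase i, m j) *
          (∏ j ∈ Finset.Icc (k+1) (n-1), (s i - s j + a j * b j * m j)) *
          ∏ j ∈ (Finset.Icc k n).erase i, (s i - s j)⁻¹) * cB

lemma lagrange_top_coeff {ι : Type*} [DecidableEq ι] (t : Finset ι) (v : ι → ℂ)
    (hvs : Set.InjOn v t) (P : ℂ[X]) (hP : P.degree < ((#t - 1 : ℕ) : WithBot ℕ)) :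
    ∑ i ∈ t, P.eval (v i) * ∏ j ∈ t.erase i, (v i - v j)⁻¹ = 0 := by
  have hdeg : P.degree < (#t : ℕ) := lt_of_lt_of_le hP (by exact_mod_cast Nat.sub_le _ _)
  have h1 : P = Lagrange.interpolate t v (fun i => P.eval (v i)) :=
    Lagrange.eq_interpolate hvs hdeg
  have h2 : P.coeff (#t - 1) = 0 := Polynomial.coeff_eq_zero_of_degree_lt hP
  rw [h1, Lagrange.interpolate_apply, Polynomial.finset_sum_coeff] at h2
  rw [← h2]
  apply Finset.sum_congr rfl
  intro i hi
  rw [Polynomial.coeff_C_mul]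
  congr 1
  have hnd : (Lagrange.basis t v i).natDegree = #t - 1 := Lagrange.natDegree_basis hvs hi
  rw [← hnd, ← Polynomial.leadingCoeff]
  unfold Lagrange.basis
  rw [Polynomial.leadingCoeff_prod]
  apply Finset.prod_congr rfl
  intro j hj
  unfold Lagrange.basisDivisor
  rw [Polynomial.leadingCoeff_mul, Polynomial.leadingCoeff_C,
    (Polynomial.monic_X_sub_C (v j)).leadingCoeff, mul_one]


/-- Theorem 1.3 of Wang–Ma: the general matrix inversion.
For sequences `a, b, m, s : ℤ → ℂ` with `a n ≠ 0`, `b n ≠ 0` and the `s n`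
pairwise distinct, the matrices
`F(n,k) = (b n / b k) * ∏_{i=k+1}^{n} m i * (s k - s (i-1) + a (i-1) b (i-1) m (i-1)) / (s k - s i)`
and
`G(n,k) = (a k / a n) * ∏_{i=k}^{n-1} m i * (s n - s (i+1) + a (i+1) b (i+1) m (i+1)) / (s n - s i)`
form a matrix inversion. -/
theorem general_matrix_inversion
    (a b m s : ℤ → ℂ)
    (ha : ∀ n : ℤ, a n ≠ 0) (hb : ∀ n : ℤ, b n ≠ 0)
    (hs : ∀ i j : ℤ, i ≠ j → s i ≠ s j) :
    ∀ k n : ℤ, k ≤ n →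
      (∑ i ∈ Finset.Icc k n,
        ((b n / b i) *
          ∏ j ∈ Finset.Icc (i + 1) n,
            (m j * (s i - s (j - 1) + a (j - 1) * b (j - 1) * m (j - 1)) / (s i - s j))) *
        ((a k / a i) *
          ∏ j ∈ Finset.Icc k (i - 1),
            (m j * (s i - s (j + 1) + a (j + 1) * b (j + 1) * m (j + 1)) / (s i - s j)))) =
      if n = k then 1 else 0 := by
  intro k n hkn
  rcases eq_or_lt_of_le hkn with rfl | hkn'
  · rw [if_pos rfl, Finset.Icc_self, Finset.sum_singleton,
      Finset.Icc_eq_empty (by omega : ¬ k + 1 ≤ k),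
      Finset.Icc_eq_empty (by omega : ¬ k ≤ k - 1),
      Finset.prod_empty, Finset.prod_empty, mul_one, mul_one,
      div_self (hb k), div_self (ha k), one_mul]
  · rw [if_neg (by omega : ¬ n = k)]
    set P : ℂ[X] := ∏ j ∈ Finset.Icc (k+1) (n-1), (X - C (s j - a j * b j * m j)) with hPdef
    have hinj : Set.InjOn s (Finset.Icc k n) := by
      intro x _ y _ hxy
      by_contra h
      exact hs x y h hxy
    have hcard : #(Finset.Icc k n) = (n + 1 - k).toNat := Int.card_Icc k n
    have hdeg : P.degree < ((#(Finset.Icc k n) - 1 : ℕ) : WithBot ℕ) := by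
      have h1 : P.natDegree = (n - 1 + 1 - (k + 1)).toNat := by
        rw [hPdef, Polynomial.natDegree_prod _ _ (fun j _ => Polynomial.X_sub_C_ne_zero _),
          Finset.sum_congr rfl (fun j _ => Polynomial.natDegree_X_sub_C (s j - a j * b j * m j)),
          Finset.sum_const, smul_eq_mul, mul_one, Int.card_Icc]
      refine lt_of_le_of_lt (Polynomial.degree_le_natDegree) ?_
      rw [h1, hcard]
      exact_mod_cast (by omega : (n - 1 + 1 - (k + 1)).toNat < (n + 1 - k).toNat - 1)
    have hterm : ∀ i ∈ Finset.Icc k n,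
        ((b n / b i) *
          ∏ j ∈ Finset.Icc (i + 1) n,
            (m j * (s i - s (j - 1) + a (j - 1) * b (j - 1) * m (j - 1)) / (s i - s j))) *
        ((a k / a i) *
          ∏ j ∈ Finset.Icc k (i - 1),
            (m j * (s i - s (j + 1) + a (j + 1) * b (j + 1) * m (j + 1)) / (s i - s j)))
        = (a k * b n * ∏ j ∈ Finset.Icc k n, m j) *
          (P.eval (s i) * ∏ j ∈ (Finset.Icc k n).erase i, (s i - s j)⁻¹) := by
      intro i hi
      rw [Finset.mem_Icc] at hi
      have hev : P.eval (s i)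
          = ∏ j ∈ Finset.Icc (k+1) (n-1), (s i - s j + a j * b j * m j) := by
        rw [hPdef, Polynomial.eval_prod]
        refine Finset.prod_congr rfl fun j _ => ?_
        simp only [Polynomial.eval_sub, Polynomial.eval_X, Polynomial.eval_C]
        ring
      rw [hev]
      exact term_eq a b m s ha hb hkn' hi.1 hi.2
    rw [Finset.sum_congr rfl hterm, ← Finset.mul_sum,
      lagrange_top_coeff (Finset.Icc k n) s hinj P hdeg, mul_zero]
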